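/- Suppose s and t are coprime and υ is a t-core. Then the partition τ with s-core κ_{s,t} and s-quotient (υ, υ, ..., υ) (all s components equal to υ) is a t-core. -/

import Mathlib

open Classical

/-- A partition: an infinite weakly decreasing sequence of non-negative integers
with finite sum.  Here `f n` denotes the part `λ_{n+1}`. -/
structure SeqPartition where
  f : ℕ → ℕ
  antitone : ∀ ⦃m n : ℕ⦄, m ≤ n → f n ≤ f m
  eventually_zero : ∃ N, ∀ n, N ≤ n → f n = 0

instance : Inhabited SeqPartition :=
  ⟨⟨fun _ => 0, fun _ _ _ => le_rfl, ⟨0, fun _ _ => rfl⟩⟩⟩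

namespace SeqPartition

/-- The beta-set `β_r(λ) = {λ_i - i + r : i ≥ 1}`. -/
def beta (r : ℤ) (l : SeqPartition) : Set ℤ :=
  {x | ∃ n : ℕ, x = (l.f n : ℤ) - (n + 1) + r}

/-- The size `|λ|` of a partition. -/
noncomputable def size (l : SeqPartition) : ℕ := ∑ᶠ n, l.f n

/-- The partition whose beta-set (for some shift `r`) is `B`, if it exists. -/
noncomputable def ofBeta (B : Set ℤ) : SeqPartition :=
  if h : ∃ l : SeqPartition, ∃ r : ℤ, beta r l = B then h.choose else default

/-- The beta-set of the `s`-core: beads pushed up their runners as far as possible.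
A position `x` is occupied iff the number of beads of `B` weakly above it on its runner
exceeds the number of gaps strictly below it on its runner. -/
def coreBeta (s : ℕ) (B : Set ℤ) : Set ℤ :=
  {x | ({y : ℤ | y ∉ B ∧ y ≡ x [ZMOD (s : ℤ)] ∧ y < x}).ncard
      < ({b : ℤ | b ∈ B ∧ b ≡ x [ZMOD (s : ℤ)] ∧ x ≤ b}).ncard}

/-- The `s`-core of a partition. -/
noncomputable def core (s : ℕ) (l : SeqPartition) : SeqPartition :=
  ofBeta (coreBeta s (beta 0 l))

/-- `λ` is an `s`-core. -/
def IsCore (s : ℕ) (l : SeqPartition) : Prop := core s l = l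

/-- The `s`-weight of `λ`. -/
noncomputable def wt (s : ℕ) (l : SeqPartition) : ℕ := (size l - size (core s l)) / s

/-- The component of the `s`-quotient of `λ` indexed by `j : ZMod s`. -/
noncomputable def quot (s : ℕ) (l : SeqPartition) (j : ZMod s) : SeqPartition :=
  ofBeta {z : ℤ | ((j.val : ℤ) + (s : ℤ) * z) ∈ beta 0 l}

/-- The `s`-set entry `Γ_j(λ)`: the smallest integer in the class `j` mod `s`
not lying in the beta-set of the `s`-core of `λ`. -/
noncomputable def sSet (s : ℕ) (l : SeqPartition) (j : ZMod s) : ℤ :=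
  sInf {x : ℤ | (x : ZMod s) = j ∧ x ∉ beta 0 (core s l)}

/-- `λ` is an `[s:t]`-core. -/
def IsGenCore (s t : ℕ) (l : SeqPartition) : Prop :=
  wt s (core t l) = wt s l

/-- The level `t` action of the generator `w_i` of the affine symmetric group `W_s` on `ℤ`. -/
def genActZ (s t : ℕ) (i : ZMod s) (n : ℤ) : ℤ :=
  if (n : ZMod s) = (i - 1) * (t : ZMod s) - ((((s : ℤ) - 1) * ((t : ℤ) - 1) / 2 : ℤ) : ZMod s)
    then n + t
  else if (n : ZMod s) = i * (t : ZMod s) - ((((s : ℤ) - 1) * ((t : ℤ) - 1) / 2 : ℤ) : ZMod s)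
    then n - t
  else n

/-- The level `t` action of the generator `w_i` of `W_s` on partitions, via beta-sets. -/
noncomputable def genAct (s t : ℕ) (i : ZMod s) (l : SeqPartition) : SeqPartition :=
  ofBeta (genActZ s t i '' beta 0 l)

/-- The action of a word in the generators of `W_s`, at level `t`, on partitions. -/
noncomputable def wordAct (s t : ℕ) (w : List (ZMod s)) (l : SeqPartition) : SeqPartition :=
  w.foldr (genAct s t) l

/-- `λ` and `μ` lie in the same orbit for the level `t` action of `W_s`. -/
def SameOrbit (s t : ℕ) (l m : SeqPartition) : Prop :=
  ∃ w : List (ZMod s), wordAct s t w l = m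

/-- `λ` and `μ` lie in the same orbit for the commuting actions of `W_s` (level `t`)
and `W_t` (level `s`). -/
def SameOrbit2 (s t : ℕ) (l m : SeqPartition) : Prop :=
  ∃ a : List (ZMod s), ∃ b : List (ZMod t), wordAct s t a (wordAct t s b l) = m

/-- The `t`-weighted `s`-quotient of `λ`: the multiset of pairs
`(Γ_i(λ) + tℤ, λ^(i))` over `i ∈ ℤ/sℤ`. -/
noncomputable def twq (s t : ℕ) (l : SeqPartition) : Multiset (ZMod t × SeqPartition) :=
  ((List.range s).map (fun i =>
    (((sSet s l (i : ZMod s) : ℤ) : ZMod t), quot s l (i : ZMod s))) : Multiset _)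

/-- The largest `(s,t)`-core `κ_{s,t}`: the partition whose beta-set is the set of
integers not expressible as a non-negative integer combination of `s` and `t`. -/
noncomputable def kappa (s t : ℕ) : SeqPartition :=
  ofBeta {x : ℤ | ¬ ∃ a b : ℕ, x = (a : ℤ) * s + (b : ℤ) * t}

end SeqPartition


namespace PartitionAux
open SeqPartition

lemma beta_shift {r : ℤ} {l : SeqPartition} {x : ℤ} :
    x ∈ beta r l ↔ x - r ∈ beta 0 l := by
  constructor <;> rintro ⟨n, hn⟩ <;> exact ⟨n, by omega⟩

/-- the enumerating sequence of the beta-set -/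
def seq (r : ℤ) (l : SeqPartition) (n : ℕ) : ℤ := (l.f n : ℤ) - (n + 1) + r

lemma seq_strictAnti (r : ℤ) (l : SeqPartition) : StrictAnti (seq r l) := by
  apply strictAnti_nat_of_succ_lt
  intro n
  have := l.antitone (Nat.le_succ n)
  unfold seq
  have h2 : (l.f (n+1) : ℤ) ≤ l.f n := by exact_mod_cast this
  push_cast; omega

lemma beta_eq_range (r : ℤ) (l : SeqPartition) : beta r l = Set.range (seq r l) := by
  ext x; simp [beta, seq, Set.range, eq_comm]

lemma beta_inj {r r' : ℤ} {l l' : SeqPartition} (h : beta r l = beta r' l') : l = l' := by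
  rw [beta_eq_range, beta_eq_range] at h
  have h2 : Set.range (OrderDual.toDual ∘ seq r l) =
      Set.range (OrderDual.toDual ∘ seq r' l') := by
    rw [Set.range_comp, Set.range_comp, h]
  have hmono : ∀ (r : ℤ) (l : SeqPartition), StrictMono (OrderDual.toDual ∘ seq r l) :=
    fun r l => fun a b hab => (seq_strictAnti r l) hab
  have heq := (StrictMono.range_inj (hmono r l) (hmono r' l')).1 h2
  have heq' : ∀ n, seq r l n = seq r' l' n := fun n => congrFun heq n
  obtain ⟨N, hN⟩ := l.eventually_zero
  obtain ⟨N', hN'⟩ := l'.eventually_zero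
  have hrr : r = r' := by
    have := heq' (max N N')
    unfold seq at this
    rw [hN _ (le_max_left _ _), hN' _ (le_max_right _ _)] at this
    omega
  have hf : ∀ n, l.f n = l'.f n := by
    intro n; have := heq' n; unfold seq at this; omega
  cases l; cases l'; simp only [mk.injEq]; exact funext hf

lemma ofBeta_beta (r : ℤ) (l : SeqPartition) : ofBeta (beta r l) = l := by
  unfold ofBeta
  rw [dif_pos ⟨l, r, rfl⟩]
  obtain ⟨r', hr'⟩ := (Exists.choose_spec (⟨l, r, rfl⟩ : ∃ l' : SeqPartition, ∃ r' : ℤ, beta r' l' = beta r l))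
  exact beta_inj hr'

lemma ofBeta_spec {B : Set ℤ} (h : ∃ l : SeqPartition, ∃ r : ℤ, beta r l = B) :
    ∃ r : ℤ, beta r (ofBeta B) = B := by
  unfold ofBeta
  rw [dif_pos h]
  exact h.choose_spec

/-- beta sets are bounded above -/
lemma beta_bddAbove (r : ℤ) (l : SeqPartition) : ∀ x ∈ beta r l, x ≤ (l.f 0 : ℤ) - 1 + r := by
  rintro x ⟨n, rfl⟩
  have := l.antitone (Nat.zero_le n)
  omega

/-- beta sets contain a tail -/
lemma beta_tail (r : ℤ) (l : SeqPartition) : ∃ k : ℤ, ∀ x ≤ k, x ∈ beta r l := by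
  obtain ⟨N, hN⟩ := l.eventually_zero
  refine ⟨r - N - 1, fun x hx => ⟨(r - 1 - x).toNat, ?_⟩⟩
  have h1 : (N : ℤ) ≤ r - 1 - x := by omega
  have h2 : ((r - 1 - x).toNat : ℤ) = r - 1 - x := Int.toNat_of_nonneg (by omega)
  rw [hN _ (by omega)]
  omega


variable {B : Set ℤ}

/-- Construction: a set that is bounded above and contains a tail is enumerated by a
strictly decreasing sequence that is eventually linear. -/
lemma exists_enum (hM : ∃ M : ℤ, ∀ x ∈ B, x ≤ M) (hk : ∃ k : ℤ, ∀ x ≤ k, x ∈ B) :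
    ∃ (g : ℕ → ℤ) (c : ℕ), StrictAnti g ∧ Set.range g = B ∧
      (∀ n, c ≤ n → g n = g c - (n - c)) := by
  obtain ⟨M, hM⟩ := hM
  obtain ⟨k, hk⟩ := hk
  have hne : ∀ x : ℤ, ∃ y, (y ∈ B ∧ y < x) ∧ ∀ z, (z ∈ B ∧ z < x) → z ≤ y := by
    intro x
    apply Int.exists_greatest_of_bdd ⟨M, fun z hz => hM z hz.1⟩
    exact ⟨min k (x - 1), ⟨hk _ (min_le_left _ _), by omega⟩⟩
  choose G hG1 hG2 using hne
  set g : ℕ → ℤ := fun n => G^[n] (G (M + 1)) with hg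
  have hgsucc : ∀ n, g (n + 1) = G (g n) := fun n => by
    rw [hg]; simp [Function.iterate_succ_apply']
  have hgB : ∀ n, g n ∈ B := by
    intro n; induction n with
    | zero => exact (hG1 (M+1)).1
    | succ m ih => rw [hgsucc]; exact (hG1 (g m)).1
  have hglt : ∀ n, g (n + 1) < g n := fun n => by rw [hgsucc]; exact (hG1 (g n)).2
  have hanti : StrictAnti g := strictAnti_nat_of_succ_lt hglt
  have hlin : ∀ n, g n ≤ k → g (n + 1) = g n - 1 := by
    intro n hn
    have h1 : g n - 1 ∈ B := hk _ (by omega)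
    have h2 : g n - 1 ≤ G (g n) := hG2 (g n) _ ⟨h1, by omega⟩
    have h3 : G (g n) < g n := (hG1 (g n)).2
    rw [hgsucc]; omega
  have hdrop : ∀ n : ℕ, g n ≤ g 0 - n := by
    intro n; induction n with
    | zero => simp
    | succ m ih => have := hglt m; push_cast; omega
  set c : ℕ := (g 0 - k).toNat with hc
  have hck : ∀ n, c ≤ n → g n ≤ k := by
    intro n hn
    have := hdrop n
    have : (c : ℤ) ≤ n := by exact_mod_cast hn
    omega
  have hlin2 : ∀ n, c ≤ n → g n = g c - (n - c) := by
    intro n hn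
    induction n with
    | zero => interval_cases c <;> simp
    | succ m ih =>
      rcases Nat.lt_or_ge m c with h | h
      · have : c = m + 1 := by omega
        simp [this]
      · have := hlin m (hck m h)
        have := ih h
        push_cast at *
        omega
  refine ⟨g, c, hanti, ?_, hlin2⟩
  ext x
  constructor
  · rintro ⟨n, rfl⟩; exact hgB n
  · intro hx
    have hxM : x ≤ M := hM x hx
    have hex : ∃ n, g n ≤ x := by
      refine ⟨(g 0 - x).toNat, ?_⟩
      have := hdrop (g 0 - x).toNat
      omega
    obtain ⟨n, h1, h2⟩ : ∃ n, g n ≤ x ∧ ∀ m, m < n → ¬ g m ≤ x :=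
      ⟨Nat.find hex, Nat.find_spec hex, fun m hm => Nat.find_min hex hm⟩
    cases n with
    | zero =>
      refine ⟨0, le_antisymm h1 ?_⟩
      rw [hg]
      simpa using hG2 (M + 1) x ⟨hx, by omega⟩
    | succ m =>
      have h2' : ¬ g m ≤ x := h2 m (by omega)
      have h3 : x ≤ G (g m) := hG2 (g m) x ⟨hx, by omega⟩
      rw [← hgsucc] at h3
      exact ⟨m + 1, le_antisymm h1 h3⟩

lemma exists_partition (hM : ∃ M : ℤ, ∀ x ∈ B, x ≤ M) (hk : ∃ k : ℤ, ∀ x ≤ k, x ∈ B) :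
    ∃ (g : ℕ → ℤ) (r : ℤ) (l : SeqPartition), Set.range g = B ∧
      ∀ n, g n = (l.f n : ℤ) - (n + 1) + r := by
  obtain ⟨g, c, hanti, hrange, hlin⟩ := exists_enum hM hk
  have hstep : ∀ n m : ℕ, n ≤ m → g m + ((m : ℤ) - n) ≤ g n := by
    intro n m hnm
    induction m with
    | zero => simp_all
    | succ p ih =>
      rcases Nat.lt_or_ge p n with h | h
      · have : n = p + 1 := by omega
        simp [this]
      · have h1 := ih h
        have h2 : g (p+1) < g p := hanti (by omega)
        push_cast at *
        omega
  set r : ℤ := g c + c + 1 with hr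
  have hnonneg : ∀ n : ℕ, 0 ≤ g n + n + 1 - r := by
    intro n
    rcases Nat.lt_or_ge n c with h | h
    · have := hstep n c (by omega); push_cast at *; omega
    · have := hlin n h; push_cast at *; omega
  refine ⟨g, r, ⟨fun n => (g n + n + 1 - r).toNat, ?_, ⟨c, ?_⟩⟩, hrange, ?_⟩
  · intro m n hmn
    have := hstep m n hmn
    have h1 := hnonneg m
    have h2 := hnonneg n
    omega
  · intro n hn
    have := hlin n hn
    push_cast at *
    omega
  · intro n
    simp only
    have := hnonneg n
    push_cast
    omega


lemma beta_valid (hM : ∃ M : ℤ, ∀ x ∈ B, x ≤ M) (hk : ∃ k : ℤ, ∀ x ≤ k, x ∈ B) :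
    ∃ (l : SeqPartition) (r : ℤ), beta r l = B := by
  obtain ⟨g, r, l, hrange, hseq⟩ := exists_partition hM hk
  refine ⟨l, r, ?_⟩
  have hgs : seq r l = g := funext fun n => (hseq n).symm
  rw [beta_eq_range, hgs, hrange]

lemma count_iff (u : SeqPartition) (r z : ℤ) :
    ({w : ℤ | w ∉ beta r u ∧ w < z}.ncard < {w : ℤ | w ∈ beta r u ∧ z ≤ w}.ncard) ↔ z < r := by
  obtain ⟨N₀, hN₀⟩ := u.eventually_zero
  set N' : ℕ := N₀ + (r - z).toNat with hN'
  have hN'N : N₀ ≤ N' := by omega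
  have hN'rz : r - z ≤ (N' : ℤ) := by omega
  set K : ℤ := r - N' - 1 with hK
  have hKz : K ≤ z - 1 := by omega
  have ha : ∀ w : ℤ, w ≤ K → w ∈ beta r u := by
    intro w hw
    refine ⟨(r - 1 - w).toNat, ?_⟩
    have hn : N₀ ≤ (r - 1 - w).toNat := by omega
    rw [hN₀ _ hn]
    push_cast
    omega
  have hginj : Function.Injective (seq r u) := (seq_strictAnti r u).injective
  have hb : {w : ℤ | w ∈ beta r u ∧ K + 1 ≤ w} = (seq r u) '' (Set.Iio N') := by
    ext w
    constructor
    · rintro ⟨⟨n, rfl⟩, h2⟩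
      refine ⟨n, ?_, rfl⟩
      by_contra hcon
      have hnN : N' ≤ n := by simpa using hcon
      rw [hN₀ n (le_trans hN'N hnN)] at h2
      push_cast at h2
      have : (N' : ℤ) ≤ n := by exact_mod_cast hnN
      omega
    · rintro ⟨n, hn, rfl⟩
      have hn' : (n : ℤ) < N' := by exact_mod_cast hn
      have hf : (0 : ℤ) ≤ u.f n := by positivity
      exact ⟨⟨n, rfl⟩, by unfold seq; omega⟩
  have hfin_top : {w : ℤ | w ∈ beta r u ∧ K + 1 ≤ w}.Finite := by
    rw [hb]; exact (Set.finite_Iio N').image _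
  have hcard_top : {w : ℤ | w ∈ beta r u ∧ K + 1 ≤ w}.ncard = N' := by
    rw [hb, Set.ncard_image_of_injective _ hginj, ← Finset.coe_range,
      Set.ncard_coe_finset, Finset.card_range]
  have hsub_beads : {w : ℤ | w ∈ beta r u ∧ z ≤ w} ⊆ {w : ℤ | w ∈ beta r u ∧ K + 1 ≤ w} :=
    fun w ⟨h1, h2⟩ => ⟨h1, by omega⟩
  have hsub_A : {w : ℤ | w ∈ beta r u ∧ K + 1 ≤ w ∧ w < z} ⊆ {w : ℤ | w ∈ beta r u ∧ K + 1 ≤ w} :=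
    fun w ⟨h1, h2, _⟩ => ⟨h1, h2⟩
  have hsplit : {w : ℤ | w ∈ beta r u ∧ K + 1 ≤ w} =
      {w : ℤ | w ∈ beta r u ∧ K + 1 ≤ w ∧ w < z} ∪ {w : ℤ | w ∈ beta r u ∧ z ≤ w} := by
    ext w
    simp only [Set.mem_setOf_eq, Set.mem_union]
    constructor
    · rintro ⟨h1, h2⟩
      rcases lt_or_ge w z with h | h
      · exact Or.inl ⟨h1, h2, h⟩
      · exact Or.inr ⟨h1, h⟩
    · rintro (⟨h1, h2, h3⟩ | ⟨h1, h2⟩)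
      · exact ⟨h1, h2⟩
      · exact ⟨h1, by omega⟩
  have hdisj : Disjoint {w : ℤ | w ∈ beta r u ∧ K + 1 ≤ w ∧ w < z}
      {w : ℤ | w ∈ beta r u ∧ z ≤ w} := by
    rw [Set.disjoint_left]
    rintro w ⟨_, _, h3⟩ ⟨_, h2⟩
    omega
  have hsum : (N' : ℕ) = {w : ℤ | w ∈ beta r u ∧ K + 1 ≤ w ∧ w < z}.ncard +
      {w : ℤ | w ∈ beta r u ∧ z ≤ w}.ncard := by
    rw [← hcard_top, hsplit]
    exact Set.ncard_union_eq hdisj (hfin_top.subset (hsplit ▸ hsub_A))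
      (hfin_top.subset (hsplit ▸ hsub_beads))
  have hIcc : Set.Icc (K + 1) (z - 1) =
      {w : ℤ | w ∈ beta r u ∧ K + 1 ≤ w ∧ w < z} ∪ {w : ℤ | w ∉ beta r u ∧ w < z} := by
    ext w
    simp only [Set.mem_Icc, Set.mem_setOf_eq, Set.mem_union]
    constructor
    · rintro ⟨h1, h2⟩
      by_cases hw : w ∈ beta r u
      · exact Or.inl ⟨hw, h1, by omega⟩
      · exact Or.inr ⟨hw, by omega⟩
    · rintro (⟨_, h2, h3⟩ | ⟨h1, h2⟩)
      · omega
      · have : ¬ w ≤ K := fun hc => h1 (ha w hc)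
        omega
  have hfin_Icc : (Set.Icc (K + 1) (z - 1)).Finite := Set.finite_Icc _ _
  have hdisj2 : Disjoint {w : ℤ | w ∈ beta r u ∧ K + 1 ≤ w ∧ w < z}
      {w : ℤ | w ∉ beta r u ∧ w < z} := by
    rw [Set.disjoint_left]
    rintro w ⟨h1, _, _⟩ ⟨h2, _⟩
    exact h2 h1
  have hcard_Icc : (Set.Icc (K + 1) (z - 1)).ncard = (z - K - 1).toNat := by
    rw [← Finset.coe_Icc, Set.ncard_coe_finset, Int.card_Icc]
    congr 1
    omega
  have hsum2 : (z - K - 1).toNat = {w : ℤ | w ∈ beta r u ∧ K + 1 ≤ w ∧ w < z}.ncard +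
      {w : ℤ | w ∉ beta r u ∧ w < z}.ncard := by
    rw [← hcard_Icc, hIcc]
    refine Set.ncard_union_eq hdisj2 ?_ ?_
    · exact hfin_Icc.subset (by rw [hIcc]; exact Set.subset_union_left)
    · exact hfin_Icc.subset (by rw [hIcc]; exact Set.subset_union_right)
  omega

variable {p : ℕ} {M k : ℤ}

lemma mem_coreBeta_iff {x : ℤ} :
    x ∈ coreBeta p B ↔
      ({y : ℤ | y ∉ B ∧ y ≡ x [ZMOD (p : ℤ)] ∧ y < x}).ncard
        < ({b : ℤ | b ∈ B ∧ b ≡ x [ZMOD (p : ℤ)] ∧ x ≤ b}).ncard := Iff.rfl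

lemma coreBeta_tail (hM : ∀ x ∈ B, x ≤ M) (hk : ∀ x ≤ k, x ∈ B) :
    ∀ x ≤ k, x ∈ coreBeta p B := by
  intro x hx
  rw [mem_coreBeta_iff]
  have h1 : {y : ℤ | y ∉ B ∧ y ≡ x [ZMOD (p : ℤ)] ∧ y < x} = ∅ := by
    ext y
    simp only [Set.mem_setOf_eq, Set.mem_empty_iff_false, iff_false, not_and]
    intro hy h2 h3
    exact hy (hk y (by omega))
  have h2 : ({b : ℤ | b ∈ B ∧ b ≡ x [ZMOD (p : ℤ)] ∧ x ≤ b}).Finite :=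
    (Set.finite_Icc x M).subset (fun b ⟨hb1, _, hb3⟩ => ⟨hb3, hM b hb1⟩)
  have h3 : x ∈ {b : ℤ | b ∈ B ∧ b ≡ x [ZMOD (p : ℤ)] ∧ x ≤ b} :=
    ⟨hk x hx, Int.ModEq.refl x, le_rfl⟩
  rw [h1, Set.ncard_empty]
  exact (Set.ncard_pos h2).mpr ⟨x, h3⟩

lemma coreBeta_bdd (hM : ∀ x ∈ B, x ≤ M) : ∀ x, M < x → x ∉ coreBeta p B := by
  intro x hx hcon
  rw [mem_coreBeta_iff] at hcon
  have h1 : {b : ℤ | b ∈ B ∧ b ≡ x [ZMOD (p : ℤ)] ∧ x ≤ b} = ∅ := by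
    ext b
    simp only [Set.mem_setOf_eq, Set.mem_empty_iff_false, iff_false, not_and]
    intro hb1 _ hb3
    have := hM b hb1
    omega
  rw [h1, Set.ncard_empty] at hcon
  omega

lemma coreBeta_closed (hM : ∀ x ∈ B, x ≤ M) (hk : ∀ x ≤ k, x ∈ B) :
    ∀ x ∈ coreBeta p B, x - p ∈ coreBeta p B := by
  intro x hx
  rw [mem_coreBeta_iff] at hx ⊢
  have hmod : ∀ y : ℤ, y ≡ x - p [ZMOD (p : ℤ)] ↔ y ≡ x [ZMOD (p : ℤ)] := by
    intro y
    unfold Int.ModEq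
    rw [show (x - (p:ℤ)) % p = x % p by
      rw [Int.sub_emod, Int.emod_self, sub_zero, Int.emod_emod_of_dvd _ dvd_rfl]]
  have hg : {y : ℤ | y ∉ B ∧ y ≡ x - p [ZMOD (p : ℤ)] ∧ y < x - p} ⊆
      {y : ℤ | y ∉ B ∧ y ≡ x [ZMOD (p : ℤ)] ∧ y < x} := by
    rintro y ⟨h1, h2, h3⟩
    exact ⟨h1, (hmod y).mp h2, by omega⟩
  have hbb : {b : ℤ | b ∈ B ∧ b ≡ x [ZMOD (p : ℤ)] ∧ x ≤ b} ⊆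
      {b : ℤ | b ∈ B ∧ b ≡ x - p [ZMOD (p : ℤ)] ∧ x - p ≤ b} := by
    rintro b ⟨h1, h2, h3⟩
    exact ⟨h1, (hmod b).mpr h2, by omega⟩
  have hfing : ({y : ℤ | y ∉ B ∧ y ≡ x [ZMOD (p : ℤ)] ∧ y < x}).Finite :=
    (Set.finite_Icc k x).subset (fun y ⟨hy1, _, hy3⟩ =>
      ⟨by by_contra h; exact hy1 (hk y (by omega)), by omega⟩)
  have hfinb : ({b : ℤ | b ∈ B ∧ b ≡ x - p [ZMOD (p : ℤ)] ∧ x - p ≤ b}).Finite :=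
    (Set.finite_Icc (x - p) M).subset (fun b ⟨hb1, _, hb3⟩ => ⟨hb3, hM b hb1⟩)
  calc ({y : ℤ | y ∉ B ∧ y ≡ x - p [ZMOD (p : ℤ)] ∧ y < x - p}).ncard
      ≤ ({y : ℤ | y ∉ B ∧ y ≡ x [ZMOD (p : ℤ)] ∧ y < x}).ncard :=
        Set.ncard_le_ncard hg hfing
    _ < ({b : ℤ | b ∈ B ∧ b ≡ x [ZMOD (p : ℤ)] ∧ x ≤ b}).ncard := hx
    _ ≤ ({b : ℤ | b ∈ B ∧ b ≡ x - p [ZMOD (p : ℤ)] ∧ x - p ≤ b}).ncard :=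
        Set.ncard_le_ncard hbb hfinb

lemma coreBeta_fixed (hp : 0 < p) (hM : ∀ x ∈ B, x ≤ M)
    (hcl : ∀ x ∈ B, x - p ∈ B) : coreBeta p B = B := by
  have hiter : ∀ b ∈ B, ∀ n : ℕ, b - p * n ∈ B := by
    intro b hb n
    induction n with
    | zero => simpa using hb
    | succ m ih =>
      have := hcl _ ih
      have he : b - p * (m + 1 : ℕ) = b - p * m - p := by push_cast; ring
      rw [he]
      exact this
  have hdown : ∀ b ∈ B, ∀ y : ℤ, y ≡ b [ZMOD (p : ℤ)] → y ≤ b → y ∈ B := by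
    intro b hb y hy hyb
    have hd : (p : ℤ) ∣ b - y := Int.ModEq.dvd hy
    obtain ⟨c, hc⟩ := hd
    have hps : (0 : ℤ) < p := by exact_mod_cast hp
    have hc0 : 0 ≤ c := by
      by_contra h
      have h1 : c ≤ -1 := by omega
      have h2 : (p : ℤ) * c ≤ (p : ℤ) * (-1) := by
        exact mul_le_mul_of_nonneg_left h1 (by omega)
      omega
    obtain ⟨n, hn⟩ : ∃ n : ℕ, (n : ℤ) = c := ⟨c.toNat, Int.toNat_of_nonneg hc0⟩
    have h2 : (p : ℤ) * n = p * c := by rw [hn]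
    have h3 : y = b - p * n := by omega
    rw [h3]
    exact hiter b hb n
  ext x
  rw [mem_coreBeta_iff]
  constructor
  · intro hx
    by_contra hxB
    have h1 : {b : ℤ | b ∈ B ∧ b ≡ x [ZMOD (p : ℤ)] ∧ x ≤ b} = ∅ := by
      ext b
      simp only [Set.mem_setOf_eq, Set.mem_empty_iff_false, iff_false, not_and]
      intro hb1 hb2 hb3
      exact hxB (hdown b hb1 x hb2.symm hb3)
    rw [h1, Set.ncard_empty] at hx
    omega
  · intro hx
    have h1 : {y : ℤ | y ∉ B ∧ y ≡ x [ZMOD (p : ℤ)] ∧ y < x} = ∅ := by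
      ext y
      simp only [Set.mem_setOf_eq, Set.mem_empty_iff_false, iff_false, not_and]
      intro hy1 hy2 hy3
      exact hy1 (hdown x hx y hy2 (by omega))
    have h2 : ({b : ℤ | b ∈ B ∧ b ≡ x [ZMOD (p : ℤ)] ∧ x ≤ b}).Finite :=
      (Set.finite_Icc x M).subset (fun b ⟨hb1, _, hb3⟩ => ⟨hb3, hM b hb1⟩)
    rw [h1, Set.ncard_empty]
    exact (Set.ncard_pos h2).mpr ⟨x, hx, Int.ModEq.refl x, le_rfl⟩

lemma runner_core (hp : 0 < p) {x j z : ℤ} (hx : x = j + p * z) {u : SeqPartition} {r : ℤ}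
    (hQ : {w : ℤ | j + p * w ∈ B} = beta r u) :
    (x ∈ coreBeta p B ↔ z < r) := by
  have hps : (0 : ℤ) < p := by exact_mod_cast hp
  have hinj : Function.Injective (fun w : ℤ => j + (p : ℤ) * w) := by
    intro a b hab
    dsimp at hab
    have : (p : ℤ) * a = p * b := by omega
    exact mul_left_cancel₀ (by omega) this
  have hmemQ : ∀ w : ℤ, j + (p : ℤ) * w ∈ B ↔ w ∈ beta r u := fun w =>
    Set.ext_iff.mp hQ w
  have key : ∀ (y c : ℤ), x - y = p * c → y = j + (p : ℤ) * (z - c) := by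
    intro y c hc
    have : (p : ℤ) * (z - c) = p * z - p * c := by ring
    omega
  have e1 : {y : ℤ | y ∉ B ∧ y ≡ x [ZMOD (p : ℤ)] ∧ y < x} =
      (fun w : ℤ => j + (p : ℤ) * w) '' {w : ℤ | w ∉ beta r u ∧ w < z} := by
    ext y
    constructor
    · rintro ⟨h1, h2, h3⟩
      obtain ⟨c, hc⟩ : (p : ℤ) ∣ x - y := Int.ModEq.dvd h2
      have hy : y = j + (p : ℤ) * (z - c) := key y c hc
      refine ⟨z - c, ⟨?_, ?_⟩, hy.symm⟩
      · rw [← hmemQ, ← hy]; exact h1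
      · rw [← mul_lt_mul_iff_right₀ hps]
        have : (p : ℤ) * (z - c) = p * z - p * c := by ring
        omega
    · rintro ⟨w, ⟨hw1, hw2⟩, rfl⟩
      have hlt : (p : ℤ) * w < p * z := (mul_lt_mul_iff_right₀ hps).2 hw2
      refine ⟨fun hc => hw1 ((hmemQ w).mp hc), ?_, by dsimp; omega⟩
      rw [Int.modEq_iff_dvd]
      refine ⟨z - w, ?_⟩
      have : (p : ℤ) * (z - w) = p * z - p * w := by ring
      dsimp
      omega
  have e2 : {b : ℤ | b ∈ B ∧ b ≡ x [ZMOD (p : ℤ)] ∧ x ≤ b} =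
      (fun w : ℤ => j + (p : ℤ) * w) '' {w : ℤ | w ∈ beta r u ∧ z ≤ w} := by
    ext y
    constructor
    · rintro ⟨h1, h2, h3⟩
      obtain ⟨c, hc⟩ : (p : ℤ) ∣ x - y := Int.ModEq.dvd h2
      have hy : y = j + (p : ℤ) * (z - c) := key y c hc
      refine ⟨z - c, ⟨?_, ?_⟩, hy.symm⟩
      · rw [← hmemQ, ← hy]; exact h1
      · rw [← mul_le_mul_iff_right₀ hps]
        have : (p : ℤ) * (z - c) = p * z - p * c := by ring
        omega
    · rintro ⟨w, ⟨hw1, hw2⟩, rfl⟩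
      have hle : (p : ℤ) * z ≤ p * w := (mul_le_mul_iff_right₀ hps).2 hw2
      refine ⟨(hmemQ w).mpr hw1, ?_, by dsimp; omega⟩
      rw [Int.modEq_iff_dvd]
      refine ⟨z - w, ?_⟩
      have : (p : ℤ) * (z - w) = p * z - p * w := by ring
      dsimp
      omega
  rw [mem_coreBeta_iff, e1, e2, Set.ncard_image_of_injective _ hinj,
    Set.ncard_image_of_injective _ hinj, count_iff]

section Frob
variable {s t : ℕ} {u v : ℤ}

/-- the minimal non-negative `b` with `b*t ≡ x mod s`, built from a Bezout coefficient -/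
noncomputable def bb (s : ℕ) (v x : ℤ) : ℤ := (x * v) % s

noncomputable def FF (s t : ℕ) (v x : ℤ) : ℤ := (bb s v x * t - x) / s

lemma bb_nonneg (hs : 0 < s) (x : ℤ) : 0 ≤ bb s v x :=
  Int.emod_nonneg _ (by exact_mod_cast hs.ne')

lemma bb_lt (hs : 0 < s) (x : ℤ) : bb s v x < s :=
  Int.emod_lt_of_pos _ (by exact_mod_cast hs)

lemma bb_dvd (huv : u * s + v * t = 1) (hs : 0 < s) (x : ℤ) :
    (s : ℤ) ∣ bb s v x * t - x := by
  have hq : bb s v x = x * v - s * (x * v / s) := Int.emod_def _ _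
  exact ⟨-(x * u) - (x * v / s) * t, by linear_combination t * hq + x * huv⟩

lemma dvd_transfer (huv : u * s + v * t = 1) {a : ℤ} (h : (s : ℤ) ∣ a * t) : (s : ℤ) ∣ a := by
  obtain ⟨c, hc⟩ := h
  exact ⟨u * a + v * c, by linear_combination (-a) * huv + v * hc⟩

lemma bb_modeq (huv : u * s + v * t = 1) (hs : 0 < s) {x y c : ℤ} (h : y = x + s * c) :
    bb s v y = bb s v x := by
  unfold bb
  rw [h]
  have : (x + s * c) * v = x * v + (c * v) * s := by ring
  rw [this, Int.add_mul_emod_self_right]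

lemma FF_eq (hs : 0 < s) {x e : ℤ} (h : bb s v x * t - x = s * e) : FF s t v x = e := by
  unfold FF
  rw [h, Int.mul_ediv_cancel_left _ (by exact_mod_cast hs.ne')]

lemma FF_spec (huv : u * s + v * t = 1) (hs : 0 < s) (x : ℤ) :
    bb s v x * t - x = s * FF s t v x := by
  obtain ⟨c, hc⟩ := bb_dvd huv hs x
  rw [hc, FF_eq hs hc]

lemma FF_shift (huv : u * s + v * t = 1) (hs : 0 < s) (x c : ℤ) :
    FF s t v (x - s * c) = FF s t v x + c := by
  have h1 := FF_spec huv hs x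
  have hb : bb s v (x - s * c) = bb s v x := bb_modeq huv hs (c := -c) (by ring)
  apply FF_eq hs
  rw [hb]
  linear_combination h1

lemma FF_mem (huv : u * s + v * t = 1) (hs : 0 < s) (ht : 0 < t) (x : ℤ) :
    (¬ ∃ a b : ℕ, x = (a : ℤ) * s + (b : ℤ) * t) ↔ 0 < FF s t v x := by
  have hts : (0 : ℤ) < t := by exact_mod_cast ht
  have hss : (0 : ℤ) < s := by exact_mod_cast hs
  have hFx := FF_spec huv hs x
  constructor
  · intro hN
    by_contra hF
    push_neg at hF
    -- then x ≥ bb*t, so x is representable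
    apply hN
    have hxb : bb s v x * t - x ≤ 0 := by
      rw [hFx]
      exact mul_nonpos_of_nonneg_of_nonpos (by omega) hF
    obtain ⟨a, ha⟩ : ∃ a : ℕ, (a : ℤ) = -FF s t v x := ⟨(-FF s t v x).toNat,
      Int.toNat_of_nonneg (by omega)⟩
    obtain ⟨b, hb⟩ : ∃ b : ℕ, (b : ℤ) = bb s v x := ⟨(bb s v x).toNat,
      Int.toNat_of_nonneg (bb_nonneg hs x)⟩
    exact ⟨a, b, by rw [ha, hb]; linear_combination -hFx⟩
  · rintro hF ⟨a, b, hab⟩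
    -- b ≡ bb mod s, b ≥ 0 so b ≥ bb, so x ≥ b*t ≥ bb*t > x
    have hd : (s : ℤ) ∣ ((b : ℤ) - bb s v x) * t := by
      refine ⟨(-a) - FF s t v x, ?_⟩
      linear_combination -hFx - hab
    obtain ⟨c, hc⟩ := dvd_transfer huv hd
    have hbb0 := bb_nonneg (v := v) hs x
    have hbbs := bb_lt (v := v) hs x
    have hb0 : (0 : ℤ) ≤ b := by positivity
    have hc0 : 0 ≤ c := by
      by_contra h
      have h1 : c ≤ -1 := by omega
      have h2 : (s : ℤ) * c ≤ (s : ℤ) * (-1) := mul_le_mul_of_nonneg_left h1 (by omega)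
      omega
    have hbge : bb s v x ≤ (b : ℤ) := by
      have h2 : (0 : ℤ) ≤ s * c := mul_nonneg (by omega) hc0
      omega
    have h3 : bb s v x * t ≤ (b : ℤ) * t := mul_le_mul_of_nonneg_right hbge (by omega)
    have h4 : (0 : ℤ) ≤ (a : ℤ) * s := by positivity
    have h5 : 0 < (s : ℤ) * FF s t v x := mul_pos hss hF
    omega

lemma FF_step (huv : u * s + v * t = 1) (hs : 0 < s) (x : ℤ) :
    FF s t v (x - t) = FF s t v x ∨ FF s t v (x - t) = FF s t v x + t := by
  have hFx := FF_spec huv hs x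
  have hFy := FF_spec huv hs (x - t)
  have hd : (s : ℤ) ∣ (bb s v (x - t) - bb s v x + 1) * t := by
    refine ⟨FF s t v (x - t) - FF s t v x, ?_⟩
    linear_combination hFy - hFx
  obtain ⟨c, hc⟩ := dvd_transfer huv hd
  have h1 := bb_nonneg (v := v) hs x
  have h2 := bb_lt (v := v) hs x
  have h3 := bb_nonneg (v := v) hs (x - t)
  have h4 := bb_lt (v := v) hs (x - t)
  have hc01 : c = 0 ∨ c = 1 := by
    rcases lt_trichotomy c 0 with h | h | h
    · exfalso
      have : (s : ℤ) * c ≤ (s : ℤ) * (-1) := mul_le_mul_of_nonneg_left (by omega) (by omega)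
      omega
    · exact Or.inl h
    · rcases lt_or_ge c 2 with h' | h'
      · exact Or.inr (by omega)
      · exfalso
        have : (s : ℤ) * 2 ≤ (s : ℤ) * c := mul_le_mul_of_nonneg_left (by omega) (by omega)
        omega
  -- bb (x - t) = bb x - 1 + s * c, and FF (x-t) = FF x + c * t
  have hkey : (s : ℤ) * FF s t v (x - t) = s * (FF s t v x + c * t) := by
    have : bb s v (x - t) = bb s v x - 1 + s * c := by omega
    rw [← hFy]
    linear_combination hFx + t * this
  have hcan : FF s t v (x - t) = FF s t v x + c * t :=
    mul_left_cancel₀ (show (s : ℤ) ≠ 0 by omega) hkey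
  rcases hc01 with rfl | rfl
  · exact Or.inl (by omega)
  · right
    rw [hcan]
    ring
end Frob

end PartitionAux

open PartitionAux

open SeqPartition in
/-- If `υ` is a `t`-core, then the partition with `s`-core `κ_{s,t}` and `s`-quotient
`(υ, ..., υ)` is a `t`-core. -/
theorem isCore_of_kappa_quot (s t : ℕ) (hs : 0 < s) (ht : 0 < t) (hst : Nat.Coprime s t)
    (ups : SeqPartition) (hups : IsCore t ups) (tau : SeqPartition)
    (h1 : core s tau = kappa s t) (h2 : ∀ j : ZMod s, quot s tau j = ups) :
    IsCore t tau := by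
  classical
  have hsZ : (0 : ℤ) < s := by exact_mod_cast hs
  have htZ : (0 : ℤ) < t := by exact_mod_cast ht
  have hsne : NeZero s := ⟨hs.ne'⟩
  obtain ⟨u, v, huv⟩ : ∃ u v : ℤ, u * s + v * t = 1 := by
    have h2 : IsCoprime (s : ℤ) (t : ℤ) := by
      rw [Int.isCoprime_iff_gcd_eq_one, Int.gcd_natCast_natCast]
      exact hst
    obtain ⟨a, b, hab⟩ := h2
    exact ⟨a, b, hab⟩
  -- Step A : the beta-set of `ups` is closed under subtracting t
  have hMu := beta_bddAbove 0 ups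
  obtain ⟨ku, hku⟩ := beta_tail 0 ups
  have hclu : ∀ y ∈ beta 0 ups, y - t ∈ beta 0 ups := by
    have hCuM : ∀ x ∈ coreBeta t (beta 0 ups), x ≤ (ups.f 0 : ℤ) - 1 + 0 := by
      intro x hx
      by_contra h
      exact coreBeta_bdd hMu x (by omega) hx
    have hCuvalid := beta_valid ⟨_, hCuM⟩ ⟨ku, coreBeta_tail hMu hku⟩
    obtain ⟨r₀, hr₀⟩ : ∃ r₀, beta r₀ ups = coreBeta t (beta 0 ups) := by
      have h0 := ofBeta_spec hCuvalid
      have h1' : ofBeta (coreBeta t (beta 0 ups)) = ups := hups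
      rw [h1'] at h0
      exact h0
    have hCucl := coreBeta_closed (p := t) hMu hku
    intro y hy
    have h1 : y + r₀ ∈ beta r₀ ups := by
      rw [beta_shift, add_sub_cancel_right]
      exact hy
    rw [hr₀] at h1
    have h2' := hCucl _ h1
    rw [← hr₀, beta_shift] at h2'
    have he : y + r₀ - t - r₀ = y - t := by ring
    rwa [he] at h2'
  -- Step B : the runners of the beta-set of tau are shifted beta-sets of ups
  have hMB := beta_bddAbove 0 tau
  obtain ⟨kB, hkB⟩ := beta_tail 0 tau
  set MB : ℤ := (tau.f 0 : ℤ) - 1 + 0 with hMBdef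
  have hQvalid : ∀ j : ZMod s, ∃ r, beta r ups =
      {z : ℤ | ((j.val : ℤ) + (s : ℤ) * z) ∈ beta 0 tau} := by
    intro j
    have hjv0 : (0 : ℤ) ≤ (j.val : ℤ) := by positivity
    have hQM : ∀ z ∈ {z : ℤ | ((j.val : ℤ) + (s : ℤ) * z) ∈ beta 0 tau}, z ≤ max MB 0 := by
      intro z hz
      rcases le_or_gt z 0 with h | h
      · omega
      · have h1 : z ≤ (s : ℤ) * z := le_mul_of_one_le_left (by omega) (by omega)
        have h2' := hMB _ hz
        omega
    have hQk : ∀ z ≤ min (kB - (j.val : ℤ)) (-1),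
        z ∈ {z : ℤ | ((j.val : ℤ) + (s : ℤ) * z) ∈ beta 0 tau} := by
      intro z hz
      have h1 : ((s : ℤ) - 1) * z ≤ 0 := mul_nonpos_of_nonneg_of_nonpos (by omega) (by omega)
      have h2' : (s : ℤ) * z = ((s : ℤ) - 1) * z + z := by ring
      apply hkB
      omega
    have hofB : ofBeta {z : ℤ | ((j.val : ℤ) + (s : ℤ) * z) ∈ beta 0 tau} = ups := h2 j
    have h0 := ofBeta_spec (beta_valid ⟨_, hQM⟩ ⟨_, hQk⟩)
    rw [hofB] at h0
    exact h0
  choose R hR using hQvalid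
  -- Step C : the s-core beta-set is a shift of the non-representable set
  have hNmem : ∀ x : ℤ, (¬ ∃ a b : ℕ, x = (a : ℤ) * s + (b : ℤ) * t) ↔ 0 < FF s t v x :=
    fun x => FF_mem huv hs ht x
  have hNM : ∀ x ∈ {x : ℤ | ¬ ∃ a b : ℕ, x = (a : ℤ) * s + (b : ℤ) * t}, x ≤ (s : ℤ) * t := by
    intro x hx
    have hF := (hNmem x).1 hx
    have hspec := FF_spec huv hs x
    have h5 : 0 < (s : ℤ) * FF s t v x := mul_pos hsZ hF
    have h6 : bb s v x * t ≤ ((s : ℤ) - 1) * t := by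
      refine mul_le_mul_of_nonneg_right ?_ (by omega)
      have := bb_lt (v := v) hs x
      omega
    have h7 : ((s : ℤ) - 1) * t ≤ (s : ℤ) * t := mul_le_mul_of_nonneg_right (by omega) (by omega)
    omega
  have hNtail : ∀ x ≤ (-1 : ℤ), x ∈ {x : ℤ | ¬ ∃ a b : ℕ, x = (a : ℤ) * s + (b : ℤ) * t} := by
    intro x hxneg
    have hspec := FF_spec huv hs x
    have hbbt : 0 ≤ bb s v x * t := mul_nonneg (bb_nonneg hs x) (by omega)
    refine (hNmem x).2 ?_
    by_contra h
    push_neg at h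
    have : (s : ℤ) * FF s t v x ≤ 0 := mul_nonpos_of_nonneg_of_nonpos (by omega) h
    omega
  obtain ⟨rN, hrN⟩ : ∃ r, beta r (kappa s t) =
      {x : ℤ | ¬ ∃ a b : ℕ, x = (a : ℤ) * s + (b : ℤ) * t} :=
    ofBeta_spec (beta_valid ⟨_, hNM⟩ ⟨-1, hNtail⟩)
  have hCBM : ∀ x ∈ coreBeta s (beta 0 tau), x ≤ MB := by
    intro x hx
    by_contra h
    exact coreBeta_bdd hMB x (by omega) hx
  obtain ⟨r', hr'⟩ : ∃ r, beta r (kappa s t) = coreBeta s (beta 0 tau) := by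
    have h0 := ofBeta_spec (beta_valid ⟨MB, hCBM⟩ ⟨kB, coreBeta_tail hMB hkB⟩)
    have h1' : ofBeta (coreBeta s (beta 0 tau)) = kappa s t := h1
    rw [h1'] at h0
    exact h0
  set d : ℤ := r' - rN with hd
  have hCBN : ∀ x : ℤ, x ∈ coreBeta s (beta 0 tau) ↔ 0 < FF s t v (x - d) := by
    intro x
    have e1 : x ∈ coreBeta s (beta 0 tau) ↔ x - r' ∈ beta 0 (kappa s t) := by
      rw [← hr']
      exact beta_shift
    have e3 : (¬ ∃ a b : ℕ, x - d = (a : ℤ) * s + (b : ℤ) * t) ↔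
        x - d - rN ∈ beta 0 (kappa s t) := by
      constructor
      · intro h
        have : x - d ∈ beta rN (kappa s t) := by rw [hrN]; exact h
        exact beta_shift.mp this
      · intro h
        have : x - d ∈ beta rN (kappa s t) := beta_shift.mpr h
        rw [hrN] at this
        exact this
    have e4 : x - d - rN = x - r' := by omega
    rw [e1, ← e4, ← e3, hNmem]
  -- Step D : the runner charges
  have hRF : ∀ j : ZMod s, R j = FF s t v ((j.val : ℤ) - d) := by
    intro j
    have key : ∀ z : ℤ, z < R j ↔ z < FF s t v ((j.val : ℤ) - d) := by
      intro z
      have hrc := runner_core (B := beta 0 tau) hs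
        (x := (j.val : ℤ) + (s : ℤ) * z) rfl (hR j).symm
      have hFsh : FF s t v (((j.val : ℤ) + (s : ℤ) * z) - d) =
          FF s t v ((j.val : ℤ) - d) - z := by
        have h0 := FF_shift huv hs ((j.val : ℤ) - d) (-z)
        have harg : (j.val : ℤ) - d - (s : ℤ) * (-z) = ((j.val : ℤ) + (s : ℤ) * z) - d := by
          ring
        rw [harg] at h0
        omega
      have hfull : z < R j ↔ 0 < FF s t v (((j.val : ℤ) + (s : ℤ) * z) - d) :=
        hrc.symm.trans (hCBN _)
      rw [hFsh] at hfull
      omega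
    have ha := (key (R j - 1)).1 (by omega)
    have hb := (key (FF s t v ((j.val : ℤ) - d) - 1)).2 (by omega)
    omega
  -- Step E : the beta-set of tau is closed under subtracting t
  have hclB : ∀ x ∈ beta 0 tau, x - t ∈ beta 0 tau := by
    intro x hx
    have hjv : (((x : ZMod s).val : ℕ) : ℤ) = x % s := ZMod.val_intCast x
    have hjv' : ((((x - t : ℤ) : ZMod s).val : ℕ) : ℤ) = (x - t) % s := ZMod.val_intCast (x - t)
    have hx_decomp : x = (((x : ZMod s).val : ℕ) : ℤ) + (s : ℤ) * (x / s) := by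
      rw [hjv, Int.emod_def]
      ring
    have hxt_decomp : x - t = ((((x - t : ℤ) : ZMod s).val : ℕ) : ℤ) +
        (s : ℤ) * ((x - t) / s) := by
      rw [hjv', Int.emod_def]
      ring
    have hxQ : (x / s) ∈ beta (R (x : ZMod s)) ups := by
      rw [hR]
      show (((x : ZMod s).val : ℕ) : ℤ) + (s : ℤ) * (x / s) ∈ beta 0 tau
      rw [← hx_decomp]
      exact hx
    have h1m : x / s - R (x : ZMod s) ∈ beta 0 ups := beta_shift.mp hxQ
    have hRj : R (x : ZMod s) = FF s t v (x - d) + x / s := by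
      rw [hRF]
      have harg : (((x : ZMod s).val : ℕ) : ℤ) - d = (x - d) - (s : ℤ) * (x / s) := by
        rw [hjv, Int.emod_def]
        ring
      rw [harg, FF_shift huv hs]
    have hRj' : R ((x - t : ℤ) : ZMod s) = FF s t v (x - t - d) + (x - t) / s := by
      rw [hRF]
      have harg : ((((x - t : ℤ) : ZMod s).val : ℕ) : ℤ) - d =
          (x - t - d) - (s : ℤ) * ((x - t) / s) := by
        rw [hjv', Int.emod_def]
        ring
      rw [harg, FF_shift huv hs]
    have hstep := FF_step huv hs (x - d)
    have harg2 : x - d - t = x - t - d := by ring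
    have hgoal : (x - t) / s - R ((x - t : ℤ) : ZMod s) ∈ beta 0 ups := by
      rcases hstep with h | h
      · rw [harg2] at h
        have he : (x - t) / s - R ((x - t : ℤ) : ZMod s) = x / s - R (x : ZMod s) := by
          rw [hRj, hRj', h]
          ring
        rw [he]
        exact h1m
      · rw [harg2] at h
        have he : (x - t) / s - R ((x - t : ℤ) : ZMod s) = x / s - R (x : ZMod s) - t := by
          rw [hRj, hRj', h]
          ring
        rw [he]
        exact hclu _ h1m
    have h3m : (x - t) / s ∈ beta (R ((x - t : ℤ) : ZMod s)) ups := by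
      rw [beta_shift]
      exact hgoal
    rw [hR] at h3m
    have h4m : ((((x - t : ℤ) : ZMod s).val : ℕ) : ℤ) + (s : ℤ) * ((x - t) / s) ∈
        beta 0 tau := h3m
    rwa [← hxt_decomp] at h4m
  -- Step F : conclude
  have hfix : coreBeta t (beta 0 tau) = beta 0 tau := coreBeta_fixed ht hMB hclB
  show ofBeta (coreBeta t (beta 0 tau)) = tau
  rw [hfix]
  exact ofBeta_beta 0 tau
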